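/- arXiv:1610.06030 — 3 statements merged into one kernel-verified Lean document; each statement's English description precedes it below -/
import Mathlib

section
/- There exists a constant K > 0, independent of c, such that for all c ≥ 1 and all ξ ∈ ℝⁿ, the symbol P_c(ξ) = sqrt(c²|ξ|² + c⁴/4) - c²/2 + 1 satisfies P_c(ξ) ≥ K·sqrt(1 + |ξ|²). -/
/-- There exists a constant `K > 0`, independent of `c`, such that for all `c ≥ 1` and all
`ξ ∈ ℝⁿ`, the symbol `P_c(ξ) = √(c²|ξ|² + c⁴/4) - c²/2 + 1` satisfies
`P_c(ξ) ≥ K·√(1 + |ξ|²)`. -/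
theorem uniform_lower_bound_symbol (n : ℕ) :
    ∃ K : ℝ, 0 < K ∧ ∀ c : ℝ, 1 ≤ c → ∀ ξ : EuclideanSpace ℝ (Fin n),
      Real.sqrt (c ^ 2 * ‖ξ‖ ^ 2 + c ^ 4 / 4) - c ^ 2 / 2 + 1
        ≥ K * Real.sqrt (1 + ‖ξ‖ ^ 2) := by
  refine ⟨1/2, by norm_num, fun c hc ξ => ?_⟩
  set r := ‖ξ‖ with hrdef
  have hr : 0 ≤ r := norm_nonneg ξ
  have hc0 : (0:ℝ) ≤ c := le_trans zero_le_one hc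
  have h1 : Real.sqrt (1 + r ^ 2) ≤ 1 + r := by
    have := Real.sqrt_le_sqrt (show (1:ℝ) + r ^ 2 ≤ (1 + r) ^ 2 by nlinarith)
    rwa [Real.sqrt_sq (by linarith)] at this
  have hnn : 0 ≤ c ^ 2 / 2 + (r - 1) / 2 := by nlinarith
  have h2 : c ^ 2 / 2 + (r - 1) / 2 ≤ Real.sqrt (c ^ 2 * r ^ 2 + c ^ 4 / 4) := by
    have hsq : (c ^ 2 / 2 + (r - 1) / 2) ^ 2 ≤ c ^ 2 * r ^ 2 + c ^ 4 / 4 := by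
      nlinarith [mul_nonneg (show (0:ℝ) ≤ c ^ 2 - 1 by nlinarith)
        (show (0:ℝ) ≤ 2 * r ^ 2 - r + 1 by nlinarith [sq_nonneg (r - 1)]),
        sq_nonneg r, sq_nonneg (r - 1)]
    have := Real.sqrt_le_sqrt hsq
    rwa [Real.sqrt_sq hnn] at this
  linarith
end

section
/- There exists a constant C > 0 such that for all c ≥ 1 and all ξ ∈ ℝⁿ, |(1 + |ξ|²)/P_c(ξ) - 1| ≤ C·|ξ|³/c², where P_c(ξ) = sqrt(c²|ξ|² + c⁴/4) - c²/2 + 1. -/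
/-- There exists a constant `C > 0` such that for all `c ≥ 1` and all `ξ ∈ ℝⁿ`,
`|(1 + |ξ|²)/P_c(ξ) - 1| ≤ C·|ξ|³/c²`, where `P_c(ξ) = √(c²|ξ|² + c⁴/4) - c²/2 + 1`. -/
theorem symbol_ratio_estimate (n : ℕ) :
    ∃ C : ℝ, 0 < C ∧ ∀ c : ℝ, 1 ≤ c → ∀ ξ : EuclideanSpace ℝ (Fin n),
      |(1 + ‖ξ‖ ^ 2) / (Real.sqrt (c ^ 2 * ‖ξ‖ ^ 2 + c ^ 4 / 4) - c ^ 2 / 2 + 1) - 1|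
        ≤ C * ‖ξ‖ ^ 3 / c ^ 2 := by
  refine ⟨2, by norm_num, fun c hc ξ => ?_⟩
  set r := ‖ξ‖ with hrdef
  have hr : 0 ≤ r := norm_nonneg _
  have hc0 : (0:ℝ) < c := lt_of_lt_of_le one_pos hc
  have harg : 0 ≤ c ^ 2 * r ^ 2 + c ^ 4 / 4 := by positivity
  set S := Real.sqrt (c ^ 2 * r ^ 2 + c ^ 4 / 4) with hSdef
  have hS2 : S ^ 2 = c ^ 2 * r ^ 2 + c ^ 4 / 4 := Real.sq_sqrt harg
  have hS0 : 0 ≤ S := Real.sqrt_nonneg _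
  have hSlb : c ^ 2 / 2 ≤ S := by
    have h1 : c ^ 2 / 2 = Real.sqrt ((c ^ 2 / 2) ^ 2) := (Real.sqrt_sq (by positivity)).symm
    rw [h1, hSdef]
    exact Real.sqrt_le_sqrt (by nlinarith [sq_nonneg (c * r)])
  set T := S - c ^ 2 / 2 with hTdef
  have hT0 : 0 ≤ T := by simp [hTdef]; linarith
  have hid : T ^ 2 = c ^ 2 * (r ^ 2 - T) := by
    have : T ^ 2 = S ^ 2 - c ^ 2 * S + c ^ 4 / 4 := by rw [hTdef]; ring
    rw [this, hS2, hTdef]; ring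
  have hTr : T ≤ r ^ 2 := by nlinarith [sq_nonneg T, sq_nonneg c]
  have hP0 : (0:ℝ) < S - c ^ 2 / 2 + 1 := by linarith
  have hne : T + 1 ≠ 0 := by positivity
  have hkey : (1 + r ^ 2) / (S - c ^ 2 / 2 + 1) - 1 = (r ^ 2 - T) / (T + 1) := by
    have h : S - c ^ 2 / 2 + 1 = T + 1 := by rw [hTdef]
    rw [h, div_sub_one hne]
    congr 1
    ring
  rw [hkey, abs_of_nonneg (div_nonneg (by linarith) (by linarith))]
  rw [div_le_div_iff₀ (by linarith) (by positivity)]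
  -- goal: (r^2 - T) * c^2 ≤ 2 * r^3 * (T+1)
  have h2 : (r ^ 2 - T) * c ^ 2 = T ^ 2 := by rw [hid]; ring
  rw [h2]
  nlinarith [mul_nonneg (mul_nonneg hr hr) hT0, mul_nonneg hr hT0,
    mul_nonneg (mul_nonneg hr hr) (mul_nonneg hr hr),
    sq_nonneg (r - T), sq_nonneg (r ^ 2 - T), mul_nonneg hT0 hT0,
    mul_nonneg (mul_nonneg hr hr) (sub_nonneg.mpr hTr),
    mul_nonneg hT0 (sub_nonneg.mpr hTr)]
end

section
/- Let 0 < s < n. There exists C > 0 such that for every f ∈ L^{n/s,1}(ℝⁿ), the Riesz potential x ↦ ∫_{ℝⁿ} f(y)/|x−y|^{n−s} dy is essentially bounded with ‖∫ f(y)/|x−y|^{n−s} dy‖_{L^∞(ℝⁿ)} ≤ C ‖f‖_{L^{n/s,1}(ℝⁿ)}. -/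
open MeasureTheory ENNReal
open Metric

private lemma riesz_aux_real (n : ℕ) (s : ℝ) (hs0 : 0 < s) (hsn : s < (n : ℝ))
    {r : ℝ} (hr : 0 < r) (k : ℕ) :
    (r * (2:ℝ)⁻¹ ^ (k+1)) ^ (-((n:ℝ) - s)) * (r * (2:ℝ)⁻¹ ^ k) ^ n
      = r ^ s * 2 ^ ((n:ℝ) - s) * ((2:ℝ)⁻¹ ^ s) ^ k := by
  set q : ℝ := (2:ℝ)⁻¹ with hq
  set d : ℝ := (n:ℝ) - s with hd
  have hq0 : (0:ℝ) < q := by norm_num [hq]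
  have ha : 0 < r * q ^ k := mul_pos hr (pow_pos hq0 k)
  have h1 : r * q ^ (k+1) = (r * q ^ k) * q := by ring
  have h2 : ((r * q ^ k) * q) ^ (-d) = (r * q ^ k) ^ (-d) * q ^ (-d) :=
    Real.mul_rpow ha.le hq0.le
  have h3 : (r * q ^ k) ^ n = (r * q ^ k) ^ ((n : ℕ) : ℝ) := (Real.rpow_natCast _ n).symm
  have h4 : (r * q ^ k) ^ (-d) * (r * q ^ k) ^ ((n : ℕ) : ℝ) = (r * q ^ k) ^ s := by
    rw [← Real.rpow_add ha]; congr 1; rw [hd]; ring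
  have h5 : (r * q ^ k) ^ s = r ^ s * (q ^ s) ^ k := by
    rw [Real.mul_rpow hr.le (pow_pos hq0 k).le]
    congr 1
    rw [← Real.rpow_natCast q k, ← Real.rpow_natCast (q ^ s) k, ← Real.rpow_mul hq0.le,
      ← Real.rpow_mul hq0.le, mul_comm]
  have h6 : q ^ (-d) = 2 ^ d := by
    rw [hq, Real.inv_rpow (by norm_num : (0:ℝ) ≤ 2), Real.rpow_neg (by norm_num : (0:ℝ) ≤ 2),
      inv_inv]
  rw [h1, h2, h3, mul_comm ((r * q ^ k) ^ (-d)) (q ^ (-d)), mul_assoc, h4, h5, h6]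
  ring

private lemma riesz_ball_lemma (n : ℕ) (hn : 1 ≤ n) (s : ℝ) (hs0 : 0 < s)
    (hsn : s < (n : ℝ)) :
    ∃ K : ℝ≥0∞, K ≠ ∞ ∧ ∀ (x : EuclideanSpace ℝ (Fin n)) (r : ℝ), 0 < r →
      ∫⁻ y in Metric.ball x r, (ENNReal.ofReal (‖x - y‖ ^ ((n:ℝ) - s)))⁻¹
        ≤ K * ENNReal.ofReal (r ^ s) := by
  haveI : Nonempty (Fin n) := ⟨⟨0, hn⟩⟩
  haveI : Nontrivial (EuclideanSpace ℝ (Fin n)) := inferInstance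
  set q : ℝ := (2:ℝ)⁻¹ with hq
  set d : ℝ := (n:ℝ) - s with hd
  have hd0 : 0 < d := by rw [hd]; linarith
  set vB : ℝ≥0∞ := volume (Metric.ball (0 : EuclideanSpace ℝ (Fin n)) 1) with hvB
  have hvBtop : vB ≠ ∞ := measure_ball_lt_top.ne
  have hqs1 : ENNReal.ofReal (q ^ s) < 1 := by
    rw [← ENNReal.ofReal_one]
    exact ENNReal.ofReal_lt_ofReal_iff_of_nonneg (by positivity) |>.2
      (Real.rpow_lt_one (by norm_num [hq]) (by norm_num [hq]) hs0)
  have hgeo : (1 - ENNReal.ofReal (q ^ s))⁻¹ ≠ ∞ := by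
    rw [ENNReal.inv_ne_top]
    simpa [tsub_eq_zero_iff_le] using hqs1.not_ge
  refine ⟨ENNReal.ofReal (2 ^ d) * vB * (1 - ENNReal.ofReal (q ^ s))⁻¹, ?_, ?_⟩
  · exact ENNReal.mul_ne_top (ENNReal.mul_ne_top ENNReal.ofReal_ne_top hvBtop) hgeo
  intro x r hr
  set w : EuclideanSpace ℝ (Fin n) → ℝ≥0∞ := fun y => (ENNReal.ofReal (‖x - y‖ ^ d))⁻¹ with hw
  set A : ℕ → Set (EuclideanSpace ℝ (Fin n)) := fun k => Metric.ball x (r * q ^ k) \ Metric.ball x (r * q ^ (k+1))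
    with hA
  have hsub : Metric.ball x r ⊆ {x} ∪ ⋃ k, A k := by
    intro y hy
    rcases eq_or_ne y x with rfl | hyx
    · exact Or.inl rfl
    right
    have hdy : 0 < dist y x := dist_pos.2 hyx
    have hdr : dist y x < r := mem_ball.1 hy
    have hex : ∃ m, r * q ^ (m+1) ≤ dist y x := by
      obtain ⟨m, hm⟩ := exists_pow_lt_of_lt_one (div_pos hdy hr)
        (by norm_num [hq] : q < 1)
      refine ⟨m, ?_⟩
      have h1 : q ^ (m+1) ≤ q ^ m := pow_le_pow_of_le_one (by norm_num [hq])
        (by norm_num [hq]) (Nat.le_succ m)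
      have h2 : r * q ^ m < dist y x := by
        have := (lt_div_iff₀ hr).1 hm
        linarith
      calc r * q ^ (m+1) ≤ r * q ^ m := by nlinarith [h1, hr.le]
        _ ≤ dist y x := h2.le
    refine Set.mem_iUnion.2 ⟨Nat.find hex, ?_, ?_⟩
    · show y ∈ Metric.ball x (r * q ^ Nat.find hex)
      rw [mem_ball]
      rcases Nat.eq_zero_or_pos (Nat.find hex) with h0 | hpos
      · rw [h0]; simpa using hdr
      · obtain ⟨j, hj⟩ := Nat.exists_eq_add_of_lt hpos
        have := Nat.find_min hex (m := Nat.find hex - 1) (by omega)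
        push_neg at this
        have hj1 : Nat.find hex - 1 + 1 = Nat.find hex := by omega
        rwa [hj1] at this
    · show y ∉ Metric.ball x (r * q ^ (Nat.find hex + 1))
      rw [mem_ball]
      exact not_lt.2 (Nat.find_spec hex)
  have hstep : ∀ k : ℕ, ∫⁻ y in A k, w y
      ≤ ENNReal.ofReal (r ^ s) * ENNReal.ofReal (2 ^ d) * ENNReal.ofReal (q ^ s) ^ k * vB := by
    intro k
    have hrq : 0 < r * q ^ (k+1) := mul_pos hr (pow_pos (by norm_num [hq]) _)
    have hbound : ∀ y ∈ A k, w y ≤ ENNReal.ofReal ((r * q ^ (k+1)) ^ (-d)) := by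
      intro y hy
      have h1 : r * q ^ (k+1) ≤ dist x y := by
        have := hy.2
        rw [mem_ball, dist_comm] at this
        exact not_lt.1 this
      have h2 : (r * q ^ (k+1)) ^ d ≤ ‖x - y‖ ^ d := by
        rw [← dist_eq_norm]
        exact Real.rpow_le_rpow hrq.le h1 hd0.le
      rw [hw, Real.rpow_neg hrq.le, ENNReal.ofReal_inv_of_pos (Real.rpow_pos_of_pos hrq d)]
      exact ENNReal.inv_le_inv.2 (ENNReal.ofReal_le_ofReal h2)
    calc ∫⁻ y in A k, w y ≤ ∫⁻ _ in A k, ENNReal.ofReal ((r * q ^ (k+1)) ^ (-d)) :=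
          setLIntegral_mono measurable_const hbound
      _ = ENNReal.ofReal ((r * q ^ (k+1)) ^ (-d)) * volume (A k) := setLIntegral_const _ _
      _ ≤ ENNReal.ofReal ((r * q ^ (k+1)) ^ (-d)) * volume (Metric.ball x (r * q ^ k)) :=
          mul_le_mul_right (measure_mono Set.diff_subset) _
      _ = ENNReal.ofReal ((r * q ^ (k+1)) ^ (-d)) *
            (ENNReal.ofReal ((r * q ^ k) ^ n) * vB) := by
          rw [Measure.addHaar_ball volume x
            (mul_pos hr (pow_pos (by norm_num [hq]) k)).le, finrank_euclideanSpace_fin]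
      _ = ENNReal.ofReal ((r * q ^ (k+1)) ^ (-d) * (r * q ^ k) ^ n) * vB := by
          rw [ENNReal.ofReal_mul (Real.rpow_nonneg hrq.le _), mul_assoc]
      _ = ENNReal.ofReal (r ^ s * 2 ^ d * (q ^ s) ^ k) * vB := by
          rw [riesz_aux_real n s hs0 hsn hr k]
      _ = ENNReal.ofReal (r ^ s) * ENNReal.ofReal (2 ^ d) * ENNReal.ofReal (q ^ s) ^ k * vB := by
          rw [ENNReal.ofReal_mul (by positivity), ENNReal.ofReal_mul (by positivity),
            ENNReal.ofReal_pow (by positivity)]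
  calc ∫⁻ y in Metric.ball x r, w y ≤ ∫⁻ y in ({x} ∪ ⋃ k, A k), w y :=
        lintegral_mono_set hsub
    _ ≤ (∫⁻ y in ({x} : Set (EuclideanSpace ℝ (Fin n))), w y) + ∫⁻ y in ⋃ k, A k, w y := lintegral_union_le _ _ _
    _ ≤ 0 + ∑' k, ∫⁻ y in A k, w y :=
        add_le_add (le_of_eq (setLIntegral_measure_zero _ _ (measure_singleton x)))
          (lintegral_iUnion_le _ _)
    _ ≤ 0 + ∑' k : ℕ, ENNReal.ofReal (r ^ s) * ENNReal.ofReal (2 ^ d)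
          * ENNReal.ofReal (q ^ s) ^ k * vB :=
        add_le_add le_rfl (ENNReal.tsum_le_tsum hstep)
    _ = (ENNReal.ofReal (r ^ s) * ENNReal.ofReal (2 ^ d) * vB)
          * ∑' k : ℕ, ENNReal.ofReal (q ^ s) ^ k := by
        rw [zero_add, ← ENNReal.tsum_mul_left]
        exact tsum_congr fun k => by ring
    _ = ENNReal.ofReal (2 ^ d) * vB * (1 - ENNReal.ofReal (q ^ s))⁻¹
          * ENNReal.ofReal (r ^ s) := by
        rw [ENNReal.tsum_geometric]; ring


private lemma riesz_set_lemma (n : ℕ) (hn : 1 ≤ n) (s : ℝ) (hs0 : 0 < s)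
    (hsn : s < (n : ℝ)) :
    ∃ K : ℝ≥0∞, K ≠ 0 ∧ K ≠ ∞ ∧ ∀ (x : EuclideanSpace ℝ (Fin n))
      (A : Set (EuclideanSpace ℝ (Fin n))),
      ∫⁻ y in A, (ENNReal.ofReal (‖x - y‖ ^ ((n:ℝ) - s)))⁻¹
        ≤ K * (volume A) ^ (s / (n:ℝ)) := by
  haveI : Nonempty (Fin n) := ⟨⟨0, hn⟩⟩
  haveI : Nontrivial (EuclideanSpace ℝ (Fin n)) := inferInstance
  obtain ⟨K, hKtop, hK⟩ := riesz_ball_lemma n hn s hs0 hsn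
  have hn0 : (0:ℝ) < n := by
    have : (1:ℝ) ≤ (n:ℝ) := by exact_mod_cast hn
    linarith
  set d : ℝ := (n:ℝ) - s with hd
  have hd0 : 0 < d := by rw [hd]; linarith
  set vB : ℝ≥0∞ := volume (Metric.ball (0 : EuclideanSpace ℝ (Fin n)) 1) with hvB
  have hvBtop : vB ≠ ∞ := measure_ball_lt_top.ne
  have hvB0 : vB ≠ 0 := (measure_ball_pos volume 0 one_pos).ne'
  set K1 : ℝ≥0∞ := K * (vB ^ (s / (n:ℝ)))⁻¹ with hK1
  set K2 : ℝ≥0∞ := vB ^ (d / (n:ℝ)) with hK2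
  have hK1top : K1 ≠ ∞ := ENNReal.mul_ne_top hKtop
    (ENNReal.inv_ne_top.2 (ENNReal.rpow_pos (hvB0.bot_lt) hvBtop).ne')
  have hK2top : K2 ≠ ∞ := ENNReal.rpow_ne_top_of_nonneg (by positivity) hvBtop
  refine ⟨K1 + K2 + 1, by simp, by
    simp [ENNReal.add_eq_top, hK1top, hK2top], ?_⟩
  intro x A
  rcases eq_or_ne (volume A) 0 with hA0 | hA0
  · simp [setLIntegral_measure_zero _ _ hA0]
  rcases eq_or_ne (volume A) ∞ with hAtop | hAtop
  · rw [hAtop, ENNReal.top_rpow_of_pos (by positivity), ENNReal.mul_top (by simp)]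
    exact le_top
  set μA : ℝ≥0∞ := volume A with hμA
  set t : ℝ≥0∞ := μA / vB with ht
  have ht0 : t ≠ 0 := by
    simp [ht, ENNReal.div_eq_zero_iff, hA0, hvBtop]
  have httop : t ≠ ∞ := (ENNReal.div_lt_top hAtop hvB0).ne
  set r : ℝ := t.toReal ^ ((n:ℝ))⁻¹ with hr
  have htR : 0 < t.toReal := ENNReal.toReal_pos ht0 httop
  have hrpos : 0 < r := Real.rpow_pos_of_pos htR _
  have hconv : ∀ a : ℝ, 0 ≤ a → ENNReal.ofReal (r ^ a) = t ^ (a / (n:ℝ)) := by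
    intro a ha
    rw [hr, ← Real.rpow_mul htR.le]
    have : ((n:ℝ))⁻¹ * a = a / (n:ℝ) := by field_simp
    rw [this, ENNReal.toReal_rpow, ENNReal.ofReal_toReal
      (ENNReal.rpow_ne_top_of_nonneg (by positivity) httop)]
  set w : EuclideanSpace ℝ (Fin n) → ℝ≥0∞ :=
    fun y => (ENNReal.ofReal (‖x - y‖ ^ d))⁻¹ with hw
  have hpiece1 : ∫⁻ y in A ∩ Metric.ball x r, w y ≤ K1 * μA ^ (s / (n:ℝ)) := by
    calc ∫⁻ y in A ∩ Metric.ball x r, w y ≤ ∫⁻ y in Metric.ball x r, w y :=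
          lintegral_mono_set Set.inter_subset_right
      _ ≤ K * ENNReal.ofReal (r ^ s) := hK x r hrpos
      _ = K * (t ^ (s / (n:ℝ))) := by rw [hconv s hs0.le]
      _ = K1 * μA ^ (s / (n:ℝ)) := by
          rw [hK1, ht, ENNReal.div_rpow_of_nonneg _ _ (by positivity), div_eq_mul_inv]
          ring
  have hpiece2 : ∫⁻ y in A \ Metric.ball x r, w y ≤ K2 * μA ^ (s / (n:ℝ)) := by
    have hbound : ∀ y ∈ A \ Metric.ball x r, w y ≤ ENNReal.ofReal (r ^ (-d)) := by
      intro y hy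
      have h1 : r ≤ dist x y := by
        have := hy.2
        rw [Metric.mem_ball, dist_comm] at this
        exact not_lt.1 this
      have h2 : r ^ d ≤ ‖x - y‖ ^ d := by
        rw [← dist_eq_norm]
        exact Real.rpow_le_rpow hrpos.le h1 hd0.le
      rw [hw, Real.rpow_neg hrpos.le, ENNReal.ofReal_inv_of_pos (Real.rpow_pos_of_pos hrpos d)]
      exact ENNReal.inv_le_inv.2 (ENNReal.ofReal_le_ofReal h2)
    calc ∫⁻ y in A \ Metric.ball x r, w y
        ≤ ∫⁻ _ in A \ Metric.ball x r, ENNReal.ofReal (r ^ (-d)) :=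
          setLIntegral_mono measurable_const hbound
      _ = ENNReal.ofReal (r ^ (-d)) * volume (A \ Metric.ball x r) := setLIntegral_const _ _
      _ ≤ ENNReal.ofReal (r ^ (-d)) * μA :=
          mul_le_mul_right (measure_mono Set.diff_subset) _
      _ = (t ^ (d / (n:ℝ)))⁻¹ * μA := by
          rw [Real.rpow_neg hrpos.le, ENNReal.ofReal_inv_of_pos (Real.rpow_pos_of_pos hrpos d),
            hconv d hd0.le]
      _ = K2 * μA ^ (s / (n:ℝ)) := by
          have hc : t ^ (d / (n:ℝ)) = μA ^ (d / (n:ℝ)) * (vB ^ (d / (n:ℝ)))⁻¹ := by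
            rw [ht, div_eq_mul_inv,
              ENNReal.mul_rpow_of_ne_top hAtop (ENNReal.inv_ne_top.2 hvB0),
              ENNReal.inv_rpow]
          rw [hc, ENNReal.mul_inv
            (Or.inl (ENNReal.rpow_pos hA0.bot_lt hAtop).ne')
            (Or.inl (ENNReal.rpow_ne_top_of_nonneg (by positivity) hAtop)), inv_inv,
            ← ENNReal.rpow_neg, hK2]
          have : (μA ^ (-(d / (n:ℝ))) * vB ^ (d / (n:ℝ))) * μA
              = vB ^ (d / (n:ℝ)) * (μA ^ (-(d / (n:ℝ))) * μA ^ (1:ℝ)) := by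
            rw [ENNReal.rpow_one]; ring
          rw [this, ← ENNReal.rpow_add _ _ hA0 hAtop]
          congr 2
          field_simp
          ring
  calc ∫⁻ y in A, w y = ∫⁻ y in (A ∩ Metric.ball x r) ∪ (A \ Metric.ball x r), w y := by
        rw [Set.inter_union_diff]
    _ ≤ (∫⁻ y in A ∩ Metric.ball x r, w y) + ∫⁻ y in A \ Metric.ball x r, w y :=
        lintegral_union_le _ _ _
    _ ≤ K1 * μA ^ (s / (n:ℝ)) + K2 * μA ^ (s / (n:ℝ)) := add_le_add hpiece1 hpiece2
    _ ≤ (K1 + K2 + 1) * μA ^ (s / (n:ℝ)) := by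
        rw [add_mul, add_mul, one_mul]
        exact le_self_add


/-- The Lorentz quasinorm `‖f‖_{L^{p,q}(ℝⁿ)}` for `1 ≤ p < ∞` and `1 ≤ q ≤ ∞`:
`(p ∫₀^∞ λ^{q-1} |{|f| ≥ λ}|^{q/p} dλ)^{1/q}` for finite `q`, and
`sup_{λ>0} λ |{|f| ≥ λ}|^{1/p}` for `q = ∞`. -/
noncomputable def lorentzNorm (n : ℕ) (p : ℝ) (q : ℝ≥0∞)
    (f : EuclideanSpace ℝ (Fin n) → ℂ) : ℝ≥0∞ :=
  if q = ∞ then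
    ⨆ l : ℝ, ENNReal.ofReal l * (volume {x | l ≤ ‖f x‖}) ^ (1 / p)
  else
    (ENNReal.ofReal p * ∫⁻ l in Set.Ioi (0 : ℝ),
        ENNReal.ofReal (l ^ (q.toReal - 1)) * (volume {x | l ≤ ‖f x‖}) ^ (q.toReal / p))
      ^ (1 / q.toReal)


/-- Endpoint fractional integration: for `0 < s < n` there is `C > 0` such that for every
`f ∈ L^{n/s,1}(ℝⁿ)`, the Riesz potential `x ↦ ∫ f(y)/|x-y|^{n-s} dy` is essentially bounded
with `‖∫ f(y)/|x-y|^{n-s} dy‖_{L^∞} ≤ C ‖f‖_{L^{n/s,1}}`. -/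
theorem riesz_potential_endpoint (n : ℕ) (hn : 1 ≤ n) (s : ℝ) (hs0 : 0 < s)
    (hsn : s < (n : ℝ)) :
    ∃ C : ℝ, 0 < C ∧ ∀ f : EuclideanSpace ℝ (Fin n) → ℂ,
      lorentzNorm n ((n : ℝ) / s) 1 f < ∞ →
      eLpNorm
          (fun x => ∫ y : EuclideanSpace ℝ (Fin n),
            f y / ((‖x - y‖ ^ ((n : ℝ) - s) : ℝ) : ℂ)) ∞ volume
        ≤ ENNReal.ofReal C * lorentzNorm n ((n : ℝ) / s) 1 f := by
  haveI : Nonempty (Fin n) := ⟨⟨0, hn⟩⟩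
  haveI : Nontrivial (EuclideanSpace ℝ (Fin n)) := inferInstance
  obtain ⟨K, hK0, hKtop, hK⟩ := riesz_set_lemma n hn s hs0 hsn
  have hn0 : (0:ℝ) < n := by
    have : (1:ℝ) ≤ (n:ℝ) := by exact_mod_cast hn
    linarith
  have hd0 : 0 < (n:ℝ) - s := by linarith
  refine ⟨(K * ENNReal.ofReal (s / (n:ℝ))).toReal + 1, by positivity, ?_⟩
  intro f _
  have hCge : K ≤ ENNReal.ofReal ((K * ENNReal.ofReal (s / (n:ℝ))).toReal + 1)
      * ENNReal.ofReal ((n:ℝ) / s) := by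
    have hfin : K * ENNReal.ofReal (s / (n:ℝ)) ≠ ∞ :=
      ENNReal.mul_ne_top hKtop ENNReal.ofReal_ne_top
    rw [ENNReal.ofReal_add ENNReal.toReal_nonneg zero_le_one, ENNReal.ofReal_toReal hfin,
      ENNReal.ofReal_one]
    calc K = K * ENNReal.ofReal (s / (n:ℝ)) * ENNReal.ofReal ((n:ℝ) / s) := by
          rw [mul_assoc, ← ENNReal.ofReal_mul (by positivity)]
          rw [show s / (n:ℝ) * ((n:ℝ) / s) = 1 by field_simp]
          simp
      _ ≤ (K * ENNReal.ofReal (s / (n:ℝ)) + 1) * ENNReal.ofReal ((n:ℝ) / s) :=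
          mul_le_mul_left le_self_add _
  -- simplify the Lorentz norm
  have hlorentz : lorentzNorm n ((n:ℝ)/s) 1 f
      = ENNReal.ofReal ((n:ℝ)/s)
        * ∫⁻ l in Set.Ioi (0:ℝ), (volume {x | l ≤ ‖f x‖}) ^ (s/(n:ℝ)) := by
    rw [lorentzNorm, if_neg ENNReal.one_ne_top]
    simp only [ENNReal.toReal_one, sub_self, Real.rpow_zero, ENNReal.ofReal_one, one_mul,
      ENNReal.rpow_one, div_one]
    rw [show (1:ℝ) / ((n:ℝ)/s) = s / (n:ℝ) from one_div_div _ _]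
  by_cases hms : AEStronglyMeasurable f volume
  · -- measurable case
    set g := hms.mk f with hg
    have hgm : StronglyMeasurable g := hms.stronglyMeasurable_mk
    have hfg : f =ᵐ[volume] g := hms.ae_eq_mk
    have hsets : ∀ l : ℝ, volume {x | l ≤ ‖f x‖} = volume {x | l ≤ ‖g x‖} := by
      intro l
      refine measure_congr (hfg.mono fun a ha => ?_)
      change (l ≤ ‖f a‖) = (l ≤ ‖g a‖)
      rw [ha]
    have hptwise : (fun x => ∫ y, f y / ((‖x - y‖ ^ ((n:ℝ) - s) : ℝ) : ℂ))
        = fun x => ∫ y, g y / ((‖x - y‖ ^ ((n:ℝ) - s) : ℝ) : ℂ) := by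
      funext x
      exact integral_congr_ae (hfg.mono fun y hy => by simp only [hy])
    rw [hptwise, hlorentz]
    set I : ℝ≥0∞ := ∫⁻ l in Set.Ioi (0:ℝ), (volume {x | l ≤ ‖f x‖}) ^ (s/(n:ℝ)) with hI
    have hIg : I = ∫⁻ l in Set.Ioi (0:ℝ), (volume {x | l ≤ ‖g x‖}) ^ (s/(n:ℝ)) :=
      lintegral_congr fun l => by rw [hsets l]
    have key : ∀ x : EuclideanSpace ℝ (Fin n),
        (‖∫ y, g y / ((‖x - y‖ ^ ((n:ℝ) - s) : ℝ) : ℂ)‖₊ : ℝ≥0∞) ≤ K * I := by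
      intro x
      set w : EuclideanSpace ℝ (Fin n) → ℝ≥0∞ :=
        fun y => (ENNReal.ofReal (‖x - y‖ ^ ((n:ℝ) - s)))⁻¹ with hw
      have hwm : Measurable w :=
        (((measurable_const.sub measurable_id).norm.pow_const _).ennreal_ofReal).inv
      have hxne : ∀ᵐ y : EuclideanSpace ℝ (Fin n), y ≠ x := by
        refine ae_iff.2 ?_
        simpa using measure_singleton x
      have hwfin : ∀ᵐ y : EuclideanSpace ℝ (Fin n), w y < ∞ := by
        filter_upwards [hxne] with y hy
        have : 0 < ‖x - y‖ := by
          rw [norm_pos_iff, sub_ne_zero]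
          exact fun h => hy h.symm
        rw [hw]
        exact ENNReal.inv_lt_top.2 (ENNReal.ofReal_pos.2 (Real.rpow_pos_of_pos this _))
      have heq : (fun y => (‖g y / ((‖x - y‖ ^ ((n:ℝ) - s) : ℝ) : ℂ)‖₊ : ℝ≥0∞))
          =ᵐ[volume] fun y => w y * ENNReal.ofReal ‖g y‖ := by
        filter_upwards [hxne] with y hy
        have hpos : 0 < ‖x - y‖ := by
          rw [norm_pos_iff, sub_ne_zero]
          exact fun h => hy h.symm
        have hRpos : 0 < ‖x - y‖ ^ ((n:ℝ) - s) := Real.rpow_pos_of_pos hpos _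
        rw [← enorm_eq_nnnorm, ← ofReal_norm, norm_div, Complex.norm_real,
          Real.norm_of_nonneg hRpos.le, ENNReal.ofReal_div_of_pos hRpos, hw,
          div_eq_mul_inv, mul_comm]
      calc (‖∫ y, g y / ((‖x - y‖ ^ ((n:ℝ) - s) : ℝ) : ℂ)‖₊ : ℝ≥0∞)
          ≤ ∫⁻ y, ‖g y / ((‖x - y‖ ^ ((n:ℝ) - s) : ℝ) : ℂ)‖₊ :=
            enorm_integral_le_lintegral_enorm _
        _ = ∫⁻ y, w y * ENNReal.ofReal ‖g y‖ := lintegral_congr_ae heq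
        _ = ∫⁻ y, ENNReal.ofReal ‖g y‖ ∂(volume.withDensity w) :=
            (lintegral_withDensity_eq_lintegral_mul_non_measurable volume hwm hwfin _).symm
        _ = ∫⁻ t in Set.Ioi (0:ℝ), (volume.withDensity w) {a | t ≤ ‖g a‖} :=
            lintegral_eq_lintegral_meas_le _ (ae_of_all _ fun y => norm_nonneg _)
              hgm.measurable.norm.aemeasurable
        _ ≤ ∫⁻ t in Set.Ioi (0:ℝ), K * (volume {a | t ≤ ‖g a‖}) ^ (s/(n:ℝ)) := by
            refine lintegral_mono fun t => ?_
            rw [withDensity_apply _ (measurableSet_le measurable_const hgm.measurable.norm)]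
            exact hK x _
        _ = K * I := by rw [lintegral_const_mul' _ _ hKtop, hIg]
    calc eLpNorm (fun x => ∫ y, g y / ((‖x - y‖ ^ ((n:ℝ) - s) : ℝ) : ℂ)) ∞ volume
        ≤ K * I := by
          rw [eLpNorm_exponent_top, eLpNormEssSup]
          exact essSup_le_of_ae_le _ (ae_of_all _ key)
      _ ≤ (ENNReal.ofReal ((K * ENNReal.ofReal (s / (n:ℝ))).toReal + 1)
            * ENNReal.ofReal ((n:ℝ) / s)) * I := mul_le_mul_left hCge _
      _ = ENNReal.ofReal ((K * ENNReal.ofReal (s / (n:ℝ))).toReal + 1)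
            * (ENNReal.ofReal ((n:ℝ) / s) * I) := by rw [mul_assoc]
  · -- non-measurable case: the integral is identically zero
    have hzero : ∀ x : EuclideanSpace ℝ (Fin n),
        (∫ y, f y / ((‖x - y‖ ^ ((n:ℝ) - s) : ℝ) : ℂ)) = 0 := by
      intro x
      refine integral_undef fun hint => hms ?_
      have hcm : AEStronglyMeasurable
          (fun y : EuclideanSpace ℝ (Fin n) => ((‖x - y‖ ^ ((n:ℝ) - s) : ℝ) : ℂ)) volume :=
        (Complex.measurable_ofReal.comp
          ((measurable_const.sub measurable_id).norm.pow_const _)).aestronglyMeasurable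
      have hxne : ∀ᵐ y : EuclideanSpace ℝ (Fin n), y ≠ x := by
        refine ae_iff.2 ?_
        simpa using measure_singleton x
      have : f =ᵐ[volume] fun y => (f y / ((‖x - y‖ ^ ((n:ℝ) - s) : ℝ) : ℂ))
          * ((‖x - y‖ ^ ((n:ℝ) - s) : ℝ) : ℂ) := by
        filter_upwards [hxne] with y hy
        have hpos : 0 < ‖x - y‖ := by
          rw [norm_pos_iff, sub_ne_zero]
          exact fun h => hy h.symm
        have hne : ((‖x - y‖ ^ ((n:ℝ) - s) : ℝ) : ℂ) ≠ 0 := by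
          simp only [ne_eq, Complex.ofReal_eq_zero]
          exact (Real.rpow_pos_of_pos hpos _).ne'
        rw [div_mul_cancel₀ _ hne]
      exact (hint.aestronglyMeasurable.mul hcm).congr this.symm
    have : (fun x : EuclideanSpace ℝ (Fin n) =>
        ∫ y, f y / ((‖x - y‖ ^ ((n:ℝ) - s) : ℝ) : ℂ)) = fun _ => (0:ℂ) :=
      funext hzero
    rw [this]
    have h0 : eLpNorm (fun _ : EuclideanSpace ℝ (Fin n) => (0:ℂ)) ∞ volume = 0 :=
      eLpNorm_zero
    rw [h0]
    exact bot_le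
end
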